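/- Let r ≥ 2, let f: S¹ → S¹ be a C^r expanding map of degree d (so |d| ≥ 2), and let q: S¹ → ℝ be a strictly positive C^{r−1} function with ∫_{S¹} q dLeb = 1 such that q(f(x))·|f'(x)| = |d|·q(x) for every x ∈ S¹. Let h: S¹ → S¹ be the map induced by x̃ ↦ ∫_0^{x̃} q̃(t) dt, where q̃: ℝ → ℝ is the 1-periodic lift of q. Then h is a C^r diffeomorphism of S¹ and there exists ρ ∈ S¹ such that h(f(h⁻¹(x))) = d·x + ρ for every x ∈ S¹. -/

import Mathlib

open MeasureTheory Filter

noncomputable section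

/-- A map of the circle `S¹ = ℝ/ℤ` together with a lift `F : ℝ → ℝ`
satisfying `F (x+1) = F x + deg`, where `deg : ℤ` is the degree. -/
structure CircleMapLift where
  toFun : UnitAddCircle → UnitAddCircle
  F : ℝ → ℝ
  deg : ℤ
  lift_add_one : ∀ x : ℝ, F (x + 1) = F x + deg
  proj_lift : ∀ x : ℝ, toFun (x : UnitAddCircle) = (F x : UnitAddCircle)

/-- The circle map is `C^r` (via its lift) and expanding: `|f'(x)| > 1` everywhere. -/
structure IsCrExpanding (r : ℕ∞) (f : CircleMapLift) : Prop where
  contDiff : ContDiff ℝ r f.F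
  expanding : ∀ x : ℝ, 1 < |deriv f.F x|

/-- If `q > 0` is a `C^{r-1}` probability density on the circle
satisfying `q(f(x))·|f'(x)| = |d|·q(x)` for a `C^r` expanding map `f` of degree `d`,
then the map `h` induced by `x̃ ↦ ∫₀^x̃ q̃(t) dt` is a `C^r` diffeomorphism of the circle
conjugating `f` to the affine map `x ↦ d·x + ρ` for some `ρ`. -/
theorem density_cohomology_gives_linearizing_conjugacy
    (r : ℕ∞) (hr : 2 ≤ r)
    (f : CircleMapLift) (hf : IsCrExpanding r f) (d : ℤ) (hdeg : f.deg = d)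
    (q : UnitAddCircle → ℝ) (hqpos : ∀ x, 0 < q x)
    (hqreg : ContDiff ℝ (r - 1) (fun t : ℝ => q (t : UnitAddCircle)))
    (hqint : ∫ x, q x ∂(volume : Measure UnitAddCircle) = 1)
    (hcohom : ∀ x : ℝ,
      q (f.toFun (x : UnitAddCircle)) * |deriv f.F x| = |(d : ℝ)| * q (x : UnitAddCircle))
    -- `H` is the primitive of the periodic lift of `q`, and `h` the induced circle map
    (H : ℝ → ℝ) (hH : ∀ x : ℝ, H x = ∫ t in (0 : ℝ)..x, q (t : UnitAddCircle))
    (h : UnitAddCircle → UnitAddCircle)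
    (hh : ∀ x : ℝ, h (x : UnitAddCircle) = (H x : UnitAddCircle)) :
    Function.Bijective h ∧ ContDiff ℝ r H ∧ (∀ x : ℝ, deriv H x ≠ 0) ∧
    ∃ ρ : UnitAddCircle, ∀ y : UnitAddCircle, h (f.toFun y) = d • h y + ρ := by
  have hr1 : (1 : ℕ∞) ≤ r := le_trans (by norm_num) hr
  set qr : ℝ → ℝ := fun t : ℝ => q (t : UnitAddCircle) with hqr
  have hqrc : Continuous qr := hqreg.continuous
  have hqrpos : ∀ t, 0 < qr t := fun t => hqpos _
  have hqrper : Function.Periodic qr 1 := by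
    intro t
    simp only [hqr, AddCircle.coe_add_period]
  -- FTC: `H` has derivative `qr`
  have hHeq : H = fun u => ∫ t in (0 : ℝ)..u, qr t := funext hH
  have hHderiv : ∀ x, HasDerivAt H (qr x) x := by
    intro x
    rw [hHeq]
    exact intervalIntegral.integral_hasDerivAt_right
      (hqrc.intervalIntegrable _ _)
      (hqrc.stronglyMeasurableAtFilter volume _)
      hqrc.continuousAt
  have hderivH : deriv H = qr := funext fun x => (hHderiv x).deriv
  have hHdiff : Differentiable ℝ H := fun x => (hHderiv x).differentiableAt
  have hHc : Continuous H := hHdiff.continuous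
  have hHmono : StrictMono H :=
    strictMono_of_deriv_pos (by rw [hderivH]; exact hqrpos)
  -- `H (x + 1) = H x + 1`
  have hint1 : ∫ t in (0 : ℝ)..1, qr t = 1 := by
    have := UnitAddCircle.intervalIntegral_preimage 0 q
    rw [zero_add] at this
    rw [this, hqint]
  have hH1 : ∀ x, H (x + 1) = H x + 1 := by
    intro x
    have hadj : (∫ t in (0 : ℝ)..x, qr t) + ∫ t in x..(x + 1), qr t
        = ∫ t in (0 : ℝ)..(x + 1), qr t :=
      intervalIntegral.integral_add_adjacent_intervals
        (hqrc.intervalIntegrable _ _) (hqrc.intervalIntegrable _ _)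
    have hper : (∫ t in x..(x + 1), qr t) = ∫ t in (0 : ℝ)..(0 + 1), qr t :=
      hqrper.intervalIntegral_add_eq x 0
    rw [zero_add] at hper
    rw [hH, hH, ← hadj, hper, hint1]
  have hHint : ∀ (x : ℝ) (n : ℤ), H (x + n) = H x + n := by
    intro x n
    induction n using Int.induction_on with
    | zero => simp
    | succ k ih =>
      push_cast
      rw [show x + ((k : ℝ) + 1) = (x + k) + 1 by ring, hH1]
      push_cast at ih
      rw [ih]; ring
    | pred k ih =>
      push_cast
      push_cast at ih
      have := hH1 (x + (-(k : ℝ) - 1))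
      rw [show x + (-(k : ℝ) - 1) + 1 = x + -(k : ℝ) by ring] at this
      rw [ih] at this
      linarith
  -- Regularity of `H`
  have hHcd : ContDiff ℝ r H := by
    have key : ((r - 1 : ℕ∞) : WithTop ℕ∞) + 1 = (r : WithTop ℕ∞) := by
      have : (r - 1) + 1 = r := tsub_add_cancel_of_le hr1
      exact_mod_cast this
    rw [← key, contDiff_succ_iff_deriv]
    refine ⟨hHdiff, ?_, ?_⟩
    · intro habs
      exact absurd habs (by exact_mod_cast WithTop.coe_ne_top)
    · rw [hderivH]; exact hqreg
  -- Bijectivity of `h`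
  have hinj : Function.Injective h := by
    intro z w hzw
    induction z using QuotientAddGroup.induction_on with
    | H x =>
    induction w using QuotientAddGroup.induction_on with
    | H y =>
    rw [hh, hh] at hzw
    rw [QuotientAddGroup.eq_iff_sub_mem] at hzw
    obtain ⟨n, hn⟩ := hzw
    have hn' : H x - H y = (n : ℝ) := by simpa using hn.symm
    have : H x = H (y + n) := by rw [hHint]; linarith
    have hxy : x = y + n := hHmono.injective this
    rw [hxy, QuotientAddGroup.eq_iff_sub_mem]
    exact ⟨n, by simp⟩
  have hsurj : Function.Surjective h := by
    intro z
    induction z using QuotientAddGroup.induction_on with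
    | H y =>
    obtain ⟨n, hn⟩ := exists_int_lt (y - H 0)
    obtain ⟨m, hm⟩ := exists_int_gt (y - H 0)
    have hHn : H (n : ℝ) = H 0 + n := by simpa using hHint 0 n
    have hHm : H (m : ℝ) = H 0 + m := by simpa using hHint 0 m
    have hnm : (n : ℝ) ≤ (m : ℝ) := by linarith
    have hy : y ∈ Set.Icc (H (n : ℝ)) (H (m : ℝ)) := by
      constructor <;> [rw [hHn]; rw [hHm]] <;> linarith
    obtain ⟨x, _, hx⟩ := intermediate_value_Icc hnm hHc.continuousOn hy
    exact ⟨(x : UnitAddCircle), by rw [hh, hx]⟩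
  -- The cohomological equation on lifts
  have hFdiff : Differentiable ℝ f.F :=
    hf.contDiff.differentiable (by have : r ≠ 0 := (by rintro rfl; simp at hr1); exact_mod_cast this)
  have hF'c : Continuous (deriv f.F) :=
    hf.contDiff.continuous_deriv (by exact_mod_cast hr1)
  have hco : ∀ x : ℝ, qr (f.F x) * |deriv f.F x| = |(d : ℝ)| * qr x := by
    intro x
    have := hcohom x
    rwa [f.proj_lift] at this
  have hd0 : (d : ℝ) ≠ 0 := by
    intro hd
    have := hco 0
    rw [hd] at this
    simp only [abs_zero, zero_mul] at this
    have h1 : 0 < qr (f.F 0) * |deriv f.F 0| :=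
      mul_pos (hqrpos _) (lt_trans one_pos (hf.expanding 0))
    linarith
  set a : ℝ → ℝ := fun x => qr (f.F x) * deriv f.F x with ha
  set b : ℝ → ℝ := fun x => (d : ℝ) * qr x with hb
  have hab : ∀ x, |a x| = |b x| := by
    intro x
    simp only [ha, hb, abs_mul, abs_of_pos (hqrpos _)]
    exact hco x
  have hbne : ∀ x, b x ≠ 0 := fun x => mul_ne_zero hd0 (hqrpos x).ne'
  have habne : ∀ x, a x * b x ≠ 0 := by
    intro x
    refine mul_ne_zero ?_ (hbne x)
    intro h0
    apply hbne x
    rw [← abs_eq_zero, ← hab x, h0, abs_zero]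
  have hac : Continuous a := (hqrc.comp hFdiff.continuous).mul hF'c
  have hbc : Continuous b := continuous_const.mul hqrc
  have hgc : Continuous (fun x => a x * b x) := hac.mul hbc
  -- sign of `a x / b x` is constant
  have hsign : (∀ x, a x = b x) ∨ (∀ x, a x = -b x) := by
    have key : (∀ x, 0 < a x * b x) ∨ (∀ x, a x * b x < 0) := by
      by_contra hcon
      push_neg at hcon
      obtain ⟨⟨x₀, h₀⟩, ⟨x₁, h₁⟩⟩ := hcon
      have h01 : (0 : ℝ) ∈ Set.uIcc (a x₀ * b x₀) (a x₁ * b x₁) :=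
        Set.mem_uIcc.2 (Or.inl ⟨h₀, h₁⟩)
      obtain ⟨c, _, hc⟩ := intermediate_value_uIcc (hgc.continuousOn) h01
      exact habne c hc
    rcases key with hk | hk
    · left
      intro x
      rcases abs_eq_abs.mp (hab x) with hx | hx
      · exact hx
      · exfalso
        have := hk x
        rw [hx] at this
        nlinarith [hbne x, sq_nonneg (b x)]
    · right
      intro x
      rcases abs_eq_abs.mp (hab x) with hx | hx
      · exfalso
        have := hk x
        rw [hx] at this
        nlinarith [sq_nonneg (b x)]
      · exact hx
  -- derivative of `H ∘ F`
  have hHF : ∀ x, HasDerivAt (fun t => H (f.F t)) (a x) x := by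
    intro x
    exact (hHderiv (f.F x)).comp x (hFdiff x).hasDerivAt
  have hF1 : f.F 1 = f.F 0 + (d : ℝ) := by
    have := f.lift_add_one 0
    rw [zero_add, hdeg] at this
    exact this
  -- rule out the orientation-reversing mismatch
  have hcase : ∀ x, a x = b x := by
    rcases hsign with hs | hs
    · exact hs
    · exfalso
      set K : ℝ → ℝ := fun x => H (f.F x) + (d : ℝ) * H x with hK
      have hKd : ∀ x, HasDerivAt K 0 x := by
        intro x
        have : HasDerivAt K (a x + (d : ℝ) * qr x) x :=
          (hHF x).add ((hHderiv x).const_mul _)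
        rwa [hs x, hb, neg_add_cancel] at this
      have hconst : K 1 = K 0 :=
        is_const_of_deriv_eq_zero (fun x => (hKd x).differentiableAt)
          (fun x => (hKd x).deriv) 1 0
      have e1 : H (f.F 1) = H (f.F 0) + (d : ℝ) := by
        rw [hF1]
        have := hHint (f.F 0) d
        exact this
      have e2 : H 1 = H 0 + 1 := by simpa using hH1 0
      rw [hK] at hconst
      simp only at hconst
      rw [e1, e2] at hconst
      have : (d : ℝ) = 0 := by linarith [mul_comm (d:ℝ) (H 0)]; 
      exact hd0 this
  -- the conjugacy
  set G : ℝ → ℝ := fun x => H (f.F x) - (d : ℝ) * H x with hG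
  have hGd : ∀ x, HasDerivAt G 0 x := by
    intro x
    have : HasDerivAt G (a x - (d : ℝ) * qr x) x :=
      (hHF x).sub ((hHderiv x).const_mul _)
    rwa [hcase x, hb, sub_self] at this
  have hGconst : ∀ x, G x = G 0 := fun x =>
    is_const_of_deriv_eq_zero (fun t => (hGd t).differentiableAt)
      (fun t => (hGd t).deriv) x 0
  have hHF' : ∀ x, H (f.F x) = (d : ℝ) * H x + G 0 := by
    intro x
    have := hGconst x
    have h0 : G 0 = H (f.F 0) - (d : ℝ) * H 0 := rfl
    have hx : G x = H (f.F x) - (d : ℝ) * H x := rfl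
    rw [hx, h0] at this
    linarith
  refine ⟨⟨hinj, hsurj⟩, hHcd, fun x => by rw [hderivH]; exact (hqrpos x).ne', ⟨(G 0 : ℝ), ?_⟩⟩
  intro y
  induction y using QuotientAddGroup.induction_on with
  | H x =>
  rw [f.proj_lift, hh, hh, hHF']
  rw [show ((((d : ℝ) * H x + G 0 : ℝ)) : UnitAddCircle)
      = (((d : ℝ) * H x : ℝ) : UnitAddCircle) + ((G 0 : ℝ) : UnitAddCircle) from rfl]
  congr 1
  exact QuotientAddGroup.mk_int_mul _ d (H x)
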